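/- arXiv:2311.16925 — 2 statements merged into one kernel-verified Lean document; each statement's English description precedes it below -/
import Mathlib

section
/- The square of W_0 has entries (W_0²)_{g,h} = ∏_{i=1}^n (m_i·δ_{g_i,0}·δ_{h_i,0} + (1 - δ_{g_i,0})·(1 - δ_{h_i,0})·(1 + δ_{g_i,h_i})). -/
def wronMu {m : ℕ} [NeZero m] (x y : Fin m) : ℤ :=
  if x = 0 ∨ y = 0 then 1 else if x = y then -1 else 0

def kdel {m : ℕ} (x y : Fin m) : ℤ := if x = y then 1 else 0

def W0 {n : ℕ} (m : Fin n → ℕ) [∀ i, NeZero (m i)] :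
    Matrix (∀ i, Fin (m i)) (∀ i, Fin (m i)) ℤ :=
  fun g h => ∏ i, wronMu (g i) (h i)

lemma key {m : ℕ} [NeZero m] (a b : Fin m) :
    ∑ x : Fin m, wronMu a x * wronMu x b =
      (m : ℤ) * kdel a 0 * kdel b 0 +
        (1 - kdel a 0) * (1 - kdel b 0) * (1 + kdel a b) := by
  rcases eq_or_ne a 0 with ha | ha
  · rcases eq_or_ne b 0 with hb | hb
    · subst ha hb
      simp [wronMu, kdel, Finset.card_univ]
    · subst ha
      have : ∀ x : Fin m, wronMu 0 x * wronMu x b =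
          (if x = 0 then (1:ℤ) else 0) + (if x = b then (-1:ℤ) else 0) := by
        intro x
        rcases eq_or_ne x 0 with hx | hx
        · subst hx; simp [wronMu, kdel, Ne.symm hb, hb]
        · rcases eq_or_ne x b with hxb | hxb <;>
            simp [wronMu, kdel, hx, hxb, hb]
      rw [Finset.sum_congr rfl fun x _ => this x, Finset.sum_add_distrib]
      simp [kdel, Ne.symm hb, hb]
  · rcases eq_or_ne b 0 with hb | hb
    · subst hb
      have : ∀ x : Fin m, wronMu a x * wronMu x 0 =
          (if x = 0 then (1:ℤ) else 0) + (if x = a then (-1:ℤ) else 0) := by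
        intro x
        rcases eq_or_ne x 0 with hx | hx
        · subst hx; simp [wronMu, kdel, Ne.symm ha, ha]
        · rcases eq_or_ne x a with hxa | hxa
          · subst hxa; simp [wronMu, kdel, hx, ha]
          · simp [wronMu, kdel, hx, hxa, Ne.symm hxa, ha]
      rw [Finset.sum_congr rfl fun x _ => this x, Finset.sum_add_distrib]
      simp [kdel, ha, Ne.symm ha]
    · have : ∀ x : Fin m, wronMu a x * wronMu x b =
          (if x = 0 then (1:ℤ) else 0) +
            (if x = a then (if a = b then (1:ℤ) else 0) else 0) := by
        intro x
        rcases eq_or_ne x 0 with hx | hx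
        · subst hx; simp [wronMu, kdel, ha, hb, Ne.symm ha]
        · rcases eq_or_ne x a with hxa | hxa
          · subst hxa
            rcases eq_or_ne x b with hxb | hxb <;>
              simp [wronMu, kdel, hx, hxb, ha, hb]
          · simp [wronMu, kdel, hx, hxa, Ne.symm hxa, hb, ha]
      rw [Finset.sum_congr rfl fun x _ => this x, Finset.sum_add_distrib]
      simp [kdel, ha, hb]

theorem W0_sq_entries {n : ℕ} (m : Fin n → ℕ) [∀ i, NeZero (m i)]
    (g h : ∀ i, Fin (m i)) :
    (W0 m * W0 m) g h = ∏ i, ((m i : ℤ) * kdel (g i) 0 * kdel (h i) 0 +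
      (1 - kdel (g i) 0) * (1 - kdel (h i) 0) * (1 + kdel (g i) (h i))) := by
  rw [Matrix.mul_apply]
  simp only [W0, ← Finset.prod_mul_distrib]
  simp only [← key]
  rw [Fintype.prod_sum]
end

section
/- If two genotypes g and h have different degree, then (W_0²)_{g,h} = 0; equivalently, the columns of W_0 indexed by g and h are orthogonal. -/
def deg {n : ℕ} {m : Fin n → ℕ} [∀ i, NeZero (m i)] (g : ∀ i, Fin (m i)) : ℕ :=
  (Finset.univ.filter fun i => g i ≠ 0).card

lemma wronMu_symm {m : ℕ} [NeZero m] (x y : Fin m) : wronMu x y = wronMu y x := by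
  unfold wronMu
  by_cases h1 : x = 0 <;> by_cases h2 : y = 0 <;> by_cases h3 : x = y <;>
    simp [h1, h2, h3, eq_comm] <;> tauto

lemma colsum_zero {m : ℕ} [NeZero m] (h : Fin m) (hh : h ≠ 0) :
    ∑ x : Fin m, wronMu x h = 0 := by
  have : ∀ x : Fin m, wronMu x h =
      (if x = 0 then (1 : ℤ) else 0) + (if x = h then (-1 : ℤ) else 0) := by
    intro x
    unfold wronMu
    by_cases h1 : x = 0 <;> by_cases h2 : x = h <;>
      simp [h1, h2, hh, Ne.symm hh] at * <;> tauto
  simp only [this, Finset.sum_add_distrib, Finset.sum_ite_eq', Finset.mem_univ, if_true]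
  ring

lemma pairsum_zero {m : ℕ} [NeZero m] (a b : Fin m) (hab : ¬(a = 0 ↔ b = 0)) :
    ∑ x : Fin m, wronMu x a * wronMu x b = 0 := by
  by_cases ha : a = 0
  · have hb : b ≠ 0 := by tauto
    have : ∀ x : Fin m, wronMu x a * wronMu x b = wronMu x b := by
      intro x; simp [wronMu, ha]
    simp only [this]; exact colsum_zero b hb
  · have hb : b = 0 := by tauto
    have : ∀ x : Fin m, wronMu x a * wronMu x b = wronMu x a := by
      intro x; simp [wronMu, hb]
    simp only [this]; exact colsum_zero a ha

theorem W0_sq_zero_of_deg_ne {n : ℕ} (m : Fin n → ℕ) [∀ i, NeZero (m i)]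
    (g h : ∀ i, Fin (m i)) (hdeg : deg g ≠ deg h) :
    (W0 m * W0 m) g h = 0 ∧ ∑ x : ∀ i, Fin (m i), W0 m x g * W0 m x h = 0 := by
  -- find an index where exactly one of g i, h i is zero
  have hex : ∃ i, ¬(g i = 0 ↔ h i = 0) := by
    by_contra hc
    push_neg at hc
    apply hdeg
    unfold deg
    congr 1
    apply Finset.filter_congr
    intro i _
    have := hc i
    constructor <;> intro hi hgi <;> tauto
  obtain ⟨i₀, hi₀⟩ := hex
  have key : ∑ x : ∀ i, Fin (m i), W0 m x g * W0 m x h = 0 := by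
    have : ∀ x : ∀ i, Fin (m i),
        W0 m x g * W0 m x h = ∏ i, (wronMu (x i) (g i) * wronMu (x i) (h i)) := by
      intro x; simp [W0, Finset.prod_mul_distrib]
    simp only [this]
    rw [← Fintype.prod_sum (fun i (y : Fin (m i)) => wronMu y (g i) * wronMu y (h i))]
    exact Finset.prod_eq_zero (Finset.mem_univ i₀) (pairsum_zero _ _ hi₀)
  refine ⟨?_, key⟩
  rw [Matrix.mul_apply, ← key]
  apply Finset.sum_congr rfl
  intro x _
  congr 1
  simp only [W0]
  exact Finset.prod_congr rfl fun i _ => wronMu_symm (g i) (x i)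
end
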